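/- Let f(w) = (1/2)⟨w, Aw⟩ − ⟨b, w⟩ + c be a quadratic function on ℝⁿ with A symmetric positive definite, smallest eigenvalue λ₁ and largest eigenvalue λₙ, and unique minimizer x* = A⁻¹b. Let x ∈ ℝⁿ with g := ∇f(x) ≠ 0 and let t* := ‖g‖²/⟨g, Ag⟩ be the optimal step size. Then f(x − t*·g) − f(x*) ≤ ((λₙ − λ₁)/(λₙ + λ₁))² · (f(x) − f(x*)). -/

import Mathlib

open Matrix
open Matrix

lemma spec_key {m : ℕ} (A : Matrix (Fin m) (Fin m) ℝ) (hA : A.IsHermitian)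
    (l1 ln : ℝ) (h1 : ∀ i, l1 ≤ hA.eigenvalues i) (hn : ∀ i, hA.eigenvalues i ≤ ln)
    (hp : ∀ i, 0 ≤ hA.eigenvalues i) (v : Fin m → ℝ) :
    l1 * ln * (v ⬝ᵥ A *ᵥ v) + v ⬝ᵥ (A * A * A) *ᵥ v ≤ (l1 + ln) * (v ⬝ᵥ (A * A) *ᵥ v) := by
  set U : Matrix (Fin m) (Fin m) ℝ := (hA.eigenvectorUnitary : Matrix (Fin m) (Fin m) ℝ) with hU
  set ev := hA.eigenvalues with hev
  have hspec : A = U * diagonal ev * star U := by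
    have := hA.spectral_theorem
    simpa using this
  have hUU : star U * U = 1 := by
    simp [hU]
  have key : ∀ d e : Fin m → ℝ, (U * diagonal d * star U) * (U * diagonal e * star U)
      = U * diagonal (fun i => d i * e i) * star U := by
    intro d e
    calc (U * diagonal d * star U) * (U * diagonal e * star U)
        = U * diagonal d * (star U * U) * (diagonal e * star U) := by
          simp only [Matrix.mul_assoc]
      _ = U * (diagonal d * diagonal e) * star U := by
          rw [hUU, Matrix.mul_one]; simp only [Matrix.mul_assoc]
      _ = U * diagonal (fun i => d i * e i) * star U := by rw [diagonal_mul_diagonal]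
  have hA2 : A * A = U * diagonal (fun i => ev i * ev i) * star U := by
    rw [hspec, key]
  have hA3 : A * A * A = U * diagonal (fun i => (ev i * ev i) * ev i) * star U := by
    rw [hA2, hspec, key]
  set y : Fin m → ℝ := star U *ᵥ v with hy
  have hv : v ᵥ* U = y := by
    rw [hy, ← Matrix.mulVec_transpose]
    congr 1
  have qf : ∀ d : Fin m → ℝ, v ⬝ᵥ (U * diagonal d * star U) *ᵥ v = ∑ i, d i * (y i)^2 := by
    intro d
    have hmv : (U * diagonal d * star U) *ᵥ v = U *ᵥ (diagonal d *ᵥ y) := by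
      rw [hy, ← Matrix.mulVec_mulVec, ← Matrix.mulVec_mulVec]
    rw [hmv, Matrix.dotProduct_mulVec, hv]
    simp only [Matrix.mulVec_diagonal, dotProduct]
    refine Finset.sum_congr rfl fun i _ => by ring
  have e1 : v ⬝ᵥ A *ᵥ v = ∑ i, ev i * (y i)^2 := by rw [hspec, qf]
  have e2 : v ⬝ᵥ (A * A) *ᵥ v = ∑ i, (ev i * ev i) * (y i)^2 := by rw [hA2, qf]
  have e3 : v ⬝ᵥ (A * A * A) *ᵥ v = ∑ i, ((ev i * ev i) * ev i) * (y i)^2 := by rw [hA3, qf]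
  rw [e1, e2, e3, Finset.mul_sum, Finset.mul_sum, ← Finset.sum_add_distrib]
  refine Finset.sum_le_sum fun i _ => ?_
  have hterm := mul_nonneg (mul_nonneg (mul_nonneg (hp i)
    (sub_nonneg.mpr (hn i))) (sub_nonneg.mpr (h1 i))) (sq_nonneg (y i))
  nlinarith [hterm]

/-- One step of the gradient method with optimal step size
`t* = ‖g‖²/⟨g, Ag⟩` satisfies
`f(x − t*·g) − f(x*) ≤ ((λₙ − λ₁)/(λₙ + λ₁))² (f(x) − f(x*))`,
where `x* = A⁻¹b` and `λ₁, λₙ` are the smallest and largest eigenvalues of `A`. -/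
theorem stmt7 {n : ℕ} (A : Matrix (Fin n) (Fin n) ℝ) (hA : A.PosDef)
    (lam1 lamn : ℝ)
    (hlam1 : IsLeast (Set.range hA.1.eigenvalues) lam1)
    (hlamn : IsGreatest (Set.range hA.1.eigenvalues) lamn)
    (b : Fin n → ℝ) (c : ℝ) (f : (Fin n → ℝ) → ℝ)
    (hf : ∀ w, f w = (1/2) * (w ⬝ᵥ A.mulVec w) - b ⬝ᵥ w + c)
    (xstar : Fin n → ℝ) (hxstar : xstar = A⁻¹.mulVec b)
    (x g : Fin n → ℝ) (hg : g = A.mulVec x - b) (hg0 : g ≠ 0)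
    (tstar : ℝ) (htstar : tstar = (g ⬝ᵥ g) / (g ⬝ᵥ A.mulVec g)) :
    f (x - tstar • g) - f xstar ≤
      ((lamn - lam1) / (lamn + lam1)) ^ 2 * (f x - f xstar) := by
  -- basic eigenvalue facts
  have hbound1 : ∀ i, lam1 ≤ hA.1.eigenvalues i := fun i => hlam1.2 ⟨i, rfl⟩
  have hboundn : ∀ i, hA.1.eigenvalues i ≤ lamn := fun i => hlamn.2 ⟨i, rfl⟩
  have hevpos : ∀ i, (0:ℝ) < hA.1.eigenvalues i := fun i => hA.eigenvalues_pos i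
  have hlam1pos : 0 < lam1 := by
    obtain ⟨i, hi⟩ := hlam1.1
    rw [← hi]; exact hevpos i
  have hlamnpos : 0 < lamn := by
    obtain ⟨i, hi⟩ := hlamn.1
    rw [← hi]; exact hevpos i
  have hs : (0:ℝ) < lam1 + lamn := by linarith
  -- A xstar = b
  have hAxstar : A *ᵥ xstar = b := by
    rw [hxstar, Matrix.mulVec_mulVec, Matrix.mul_nonsing_inv _ hA.det_pos.ne'.isUnit,
      Matrix.one_mulVec]
  -- symmetry of the bilinear form
  have hsym : ∀ u w : Fin n → ℝ, u ⬝ᵥ A *ᵥ w = w ⬝ᵥ A *ᵥ u := by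
    intro u w
    rw [Matrix.dotProduct_mulVec, ← Matrix.mulVec_transpose, dotProduct_comm]
    congr 1
    have h := hA.1
    rw [Matrix.IsHermitian, conjTranspose_eq_transpose_of_trivial] at h
    rw [h]
  set e : Fin n → ℝ := x - xstar with he
  have hAe : A *ᵥ e = g := by
    rw [he, Matrix.mulVec_sub, hAxstar, hg]
  set E := e ⬝ᵥ A *ᵥ e with hE
  set G2 := g ⬝ᵥ g with hG2
  set G3 := g ⬝ᵥ A *ᵥ g with hG3
  have hG3pos : 0 < G3 := by
    have := hA.dotProduct_mulVec_pos hg0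
    simpa using this
  -- quadratic identity : f w - f xstar = (1/2) (w - xstar)ᵀ A (w - xstar)
  have hquad : ∀ w, f w - f xstar = (1/2) * ((w - xstar) ⬝ᵥ A *ᵥ (w - xstar)) := by
    intro w
    have h1 : w ⬝ᵥ A *ᵥ xstar = b ⬝ᵥ w := by rw [hAxstar, dotProduct_comm]
    have h2 : xstar ⬝ᵥ A *ᵥ w = b ⬝ᵥ w := by rw [hsym, h1]
    have h3 : xstar ⬝ᵥ A *ᵥ xstar = b ⬝ᵥ xstar := by rw [hsym, hAxstar, dotProduct_comm]
    rw [hf w, hf xstar, Matrix.mulVec_sub, sub_dotProduct, dotProduct_sub,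
      dotProduct_sub, h1, h2, h3]
    ring
  -- value along the line
  have hphi : ∀ t : ℝ, f (x - t • g) - f xstar = E/2 - t * G2 + t^2/2 * G3 := by
    intro t
    have hw : x - t • g - xstar = e - t • g := by rw [he]; abel
    have h1 : e ⬝ᵥ A *ᵥ (t • g) = t * G2 := by
      rw [Matrix.mulVec_smul, dotProduct_smul, smul_eq_mul, hsym, hAe, hG2]
    have h2 : (t • g) ⬝ᵥ A *ᵥ e = t * G2 := by
      rw [hsym, h1]
    have h3 : (t • g) ⬝ᵥ A *ᵥ (t • g) = t^2 * G3 := by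
      rw [Matrix.mulVec_smul, dotProduct_smul, smul_dotProduct, smul_eq_mul, smul_eq_mul, hG3]
      ring
    rw [hquad, hw, Matrix.mulVec_sub, sub_dotProduct, dotProduct_sub,
      dotProduct_sub, h1, h2, h3, hE]
    ring
  have hfx : f x - f xstar = E/2 := by
    have := hphi 0
    simpa using this
  -- spectral inequality
  have hsumAe2 : e ⬝ᵥ (A * A) *ᵥ e = G2 := by
    rw [← Matrix.mulVec_mulVec, hAe, hsym, hAe, hG2]
  have hsumAe3 : e ⬝ᵥ (A * A * A) *ᵥ e = G3 := by
    have h : (A * A * A) *ᵥ e = A *ᵥ (A *ᵥ g) := by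
      rw [← Matrix.mulVec_mulVec, hAe, ← Matrix.mulVec_mulVec]
    rw [h, hsym e (A *ᵥ g), hAe, dotProduct_comm, hG3]
  have hspec := spec_key A hA.1 lam1 lamn hbound1 hboundn (fun i => (hevpos i).le) e
  rw [hsumAe2, hsumAe3, ← hE] at hspec
  -- optimal step beats step 2/(lam1+lamn)
  set t0 : ℝ := 2 / (lam1 + lamn) with ht0
  have hts : tstar = G2 / G3 := htstar
  have step1 : f (x - tstar • g) - f xstar ≤ f (x - t0 • g) - f xstar := by
    rw [hphi, hphi, hts]
    have h : t0 * G2 - t0^2/2 * G3 ≤ G2^2/(2*G3) := by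
      rw [le_div_iff₀ (by linarith : (0:ℝ) < 2*G3)]
      nlinarith [sq_nonneg (G2 - t0*G3)]
    have h2 : (G2/G3) * G2 - (G2/G3)^2/2*G3 = G2^2/(2*G3) := by
      field_simp
      ring
    -- goal : E/2 - G2/G3*G2 + (G2/G3)^2/2*G3 ≤ E/2 - t0*G2 + t0^2/2*G3
    nlinarith [h, h2]
  have step2 : f (x - t0 • g) - f xstar ≤ ((lamn - lam1)/(lamn + lam1))^2 * (E/2) := by
    rw [hphi]
    have hkey : E/2 - t0 * G2 + t0^2/2 * G3 - ((lamn - lam1)/(lamn + lam1))^2 * (E/2)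
        = (2/(lam1+lamn)^2) * (lam1*lamn*E + G3 - (lam1+lamn)*G2) := by
      rw [ht0]
      have hadd : lamn + lam1 = lam1 + lamn := by ring
      rw [hadd]
      field_simp
      ring
    have hfac : (2/(lam1+lamn)^2) * (lam1*lamn*E + G3 - (lam1+lamn)*G2) ≤ 0 := by
      apply mul_nonpos_of_nonneg_of_nonpos
      · positivity
      · linarith
    linarith
  rw [hfx]
  linarith
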